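/- Let K be a field, V a finite-dimensional K-vector space of dimension n, and M a subspace of the space of alternating bilinear forms on V. If U is a subspace of V of dimension r with 0 < r < n and dim M ≥ r·n + ε for some ε ≥ 0, then the subspace M_U of forms in M whose radical contains U satisfies dim M_U ≥ r(r+1)/2 + ε. -/

import Mathlib

open Module LinearMap

set_option synthInstance.maxHeartbeats 1000000
set_option maxSynthPendingDepth 3
set_option maxHeartbeats 1000000

/-- If `M` is a subspace of alternating bilinear forms on an `n`-dimensional
space `V`, `U ≤ V` has dimension `r` with `0 < r < n`, and `dim M ≥ r·n + ε`, then the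
subspace of forms in `M` whose radical contains `U` has dimension at least `r(r+1)/2 + ε`. -/
theorem stmt0 (K : Type*) [Field K] (V : Type*) [AddCommGroup V] [Module K V]
    [FiniteDimensional K V] (n r ε : ℕ) (hn : Module.finrank K V = n)
    (M : Submodule K (V →ₗ[K] V →ₗ[K] K))
    (halt : ∀ f ∈ M, ∀ x : V, f x x = 0)
    (U : Submodule K V) (hU : Module.finrank K ↥U = r)
    (hr : 0 < r) (hrn : r < n)
    (hM : r * n + ε ≤ Module.finrank K ↥M) :
    r * (r + 1) / 2 + ε ≤
      Module.finrank K ↥(M ⊓ ⨅ u ∈ U, LinearMap.ker (LinearMap.applyₗ (R := K) u)) := by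
  classical
  haveI : FiniteDimensional K (V →ₗ[K] V →ₗ[K] K) := inferInstance
  -- skew symmetry
  have hskew : ∀ f ∈ M, ∀ x y : V, f x y = - f y x := by
    intro f hf x y
    have h := halt f hf (x + y)
    simp only [map_add, LinearMap.add_apply, halt f hf x, halt f hf y, zero_add, add_zero] at h
    linear_combination h
  -- a basis of U, viewed inside V
  let b : Basis (Fin r) K U := Module.finBasisOfFinrankEq K U hU
  let v : Fin r → V := fun i => (b i : V)
  have hvind : LinearIndependent K v :=
    b.linearIndependent.map' U.subtype (Submodule.ker_subtype U)
  have hvU : ∀ i, v i ∈ U := fun i => (b i).2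
  have hspan : Submodule.span K (Set.range v) = U := by
    have h1 : Set.range v = U.subtype '' Set.range b := by
      rw [← Set.range_comp]; rfl
    rw [h1, ← Submodule.map_span, b.span_eq, Submodule.map_top, Submodule.range_subtype]
  -- the chain of subspaces
  let N : ℕ → Submodule K (V →ₗ[K] V →ₗ[K] K) := fun k =>
    M ⊓ ⨅ i : Fin r, ⨅ _ : (i : ℕ) < k, LinearMap.ker (LinearMap.applyₗ (R := K) (v i))
  have hNmem : ∀ k f, f ∈ N k ↔ f ∈ M ∧ ∀ i : Fin r, (i : ℕ) < k → f (v i) = 0 := by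
    intro k f
    simp only [N, Submodule.mem_inf, Submodule.mem_iInf, LinearMap.mem_ker]
    rfl
  have hNr : (M ⊓ ⨅ u ∈ U, LinearMap.ker (LinearMap.applyₗ (R := K) u)) = N r := by
    ext f
    rw [hNmem, Submodule.mem_inf]
    simp only [Submodule.mem_iInf, LinearMap.mem_ker]
    constructor
    · rintro ⟨hf, h⟩
      exact ⟨hf, fun i _ => h (v i) (hvU i)⟩
    · rintro ⟨hf, h⟩
      refine ⟨hf, fun u hu => ?_⟩
      have hle : U ≤ LinearMap.ker f := by
        rw [← hspan, Submodule.span_le]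
        rintro _ ⟨i, rfl⟩
        rw [SetLike.mem_coe, LinearMap.mem_ker]
        exact h i i.isLt
      exact hle hu
  clear_value N
  -- the key induction
  have claim : ∀ k, k ≤ r →
      finrank K M + (∑ j ∈ Finset.range k, (j + 1)) ≤ finrank K (N k) + k * n := by
    intro k
    induction k with
    | zero =>
      intro _
      have hN0 : N 0 = M := by
        ext f
        rw [hNmem]
        simp
      rw [hN0]
      simp
    | succ k ih =>
      intro hk1
      have hk : k < r := hk1
      have ihk := ih (Nat.le_of_lt hk)
      set i0 : Fin r := ⟨k, hk⟩ with hi0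
      set g : (V →ₗ[K] (V →ₗ[K] K)) →ₗ[K] (V →ₗ[K] K) :=
        LinearMap.applyₗ (R := K) (v i0) with hg
      set φ : N k →ₗ[K] (V →ₗ[K] K) := g.comp (N k).subtype with hφ
      have hNsucc : N (k + 1) = N k ⊓ LinearMap.ker g := by
        ext f
        rw [hNmem (k + 1) f, Submodule.mem_inf, hNmem k f, LinearMap.mem_ker]
        constructor
        · rintro ⟨hf, h⟩
          exact ⟨⟨hf, fun i hi => h i (Nat.lt_succ_of_lt hi)⟩, h i0 (Nat.lt_succ_self k)⟩
        · rintro ⟨⟨hf, h⟩, h0⟩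
          refine ⟨hf, fun i hi => ?_⟩
          rcases Nat.lt_succ_iff_lt_or_eq.mp hi with h' | h'
          · exact h i h'
          · have : i = i0 := Fin.ext h'
            rw [this]; exact h0
      have hker : finrank K (LinearMap.ker φ) = finrank K (N (k + 1)) := by
        have h1 : LinearMap.ker φ = Submodule.comap (N k).subtype (LinearMap.ker g) :=
          LinearMap.ker_comp _ _
        rw [h1, ← Submodule.finrank_map_subtype_eq (N k), Submodule.map_comap_subtype, ← hNsucc]
      have hrank := LinearMap.finrank_range_add_finrank_ker φ
      -- the span of the first k+1 vectors
      set W : Submodule K V := Submodule.span K (Set.range (v ∘ Fin.castLE hk1)) with hW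
      have hWrank : finrank K W = k + 1 := by
        rw [hW, finrank_span_eq_card (hvind.comp _ (Fin.castLE_injective hk1))]
        simp
      have hWA : finrank K W + finrank K W.dualAnnihilator = n := by
        have := LinearEquiv.finrank_eq (R := K) (M := V ⧸ W)
          (N := {x // x ∈ W.dualAnnihilator}) (Subspace.quotEquivAnnihilator W)
        have h2 := Submodule.finrank_quotient_add_finrank W
        omega
      have hrange : LinearMap.range φ ≤ W.dualAnnihilator := by
        rintro ψ ⟨⟨f, hf⟩, rfl⟩
        rw [Submodule.mem_dualAnnihilator]
        obtain ⟨hfM, hfk⟩ := (hNmem k f).mp hf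
        have hle : W ≤ LinearMap.ker (f (v i0)) := by
          rw [hW, Submodule.span_le]
          rintro _ ⟨j, rfl⟩
          rw [SetLike.mem_coe, LinearMap.mem_ker]
          simp only [Function.comp_apply]
          rcases Nat.lt_succ_iff_lt_or_eq.mp j.isLt with h' | h'
          · have hj : ((Fin.castLE hk1 j : Fin r) : ℕ) < k := by simpa using h'
            rw [hskew f hfM, hfk _ hj]
            simp
          · have : (Fin.castLE hk1 j : Fin r) = i0 := by
              apply Fin.ext
              simpa using h'
            rw [this]
            exact halt f hfM (v i0)
        intro w hw
        exact hle hw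
      have hr2 : finrank K (LinearMap.range φ) ≤ finrank K W.dualAnnihilator :=
        Submodule.finrank_mono hrange
      rw [Finset.sum_range_succ]
      have hmul : (k + 1) * n = k * n + n := by ring
      set t := k * n
      set u := (k + 1) * n
      omega
  have hc := claim r le_rfl
  rw [hNr]
  -- Gauss sum
  have hsum : (∑ j ∈ Finset.range r, (j + 1)) * 2 = r * (r + 1) := by
    have h1 : (∑ j ∈ Finset.range r, (j + 1)) = ∑ i ∈ Finset.range (r + 1), i := by
      rw [Finset.sum_range_succ' (fun i => i) r]
      simp
    rw [h1, Finset.sum_range_id_mul_two]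
    simp [Nat.mul_comm]
  have hx : r * (r + 1) / 2 * 2 = r * (r + 1) :=
    Nat.div_mul_cancel (Nat.even_mul_succ_self r).two_dvd
  set a := finrank K (N r)
  set S := ∑ j ∈ Finset.range r, (j + 1)
  set q := r * n
  set p := r * (r + 1)
  omega
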